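/- Let C be an isodual binary linear code of length n, let σ ∈ S_n be such that C^⊥ = C^σ, let X = {1,…,n}, and let G = Aut(C). Suppose that the action of G on the set of t-element subsets of X has exactly two orbits, GT_1 and GT_2, and that (GT_1)^σ = GT_2. Then for every harmonic function f ∈ Harm_t^G (a degree-t harmonic function invariant under Aut(C)), the harmonic weight enumerators satisfy w_{C,f} + w_{C^⊥,f} = 0. -/

import Mathlib

/-- Hamming weight of a binary vector. -/
def wt {n : ℕ} (c : Fin n → ZMod 2) : ℕ :=
  (Finset.univ.filter fun i => c i ≠ 0).card

/-- Support of a binary vector, as a finset of coordinates. -/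
def suppF {n : ℕ} (c : Fin n → ZMod 2) : Finset (Fin n) :=
  Finset.univ.filter fun i => c i ≠ 0

/-- Dual code w.r.t. the standard inner product on `F₂ⁿ`. -/
def dualCode {n : ℕ} (C : Set (Fin n → ZMod 2)) : Set (Fin n → ZMod 2) :=
  {y | ∀ x ∈ C, ∑ i, x i * y i = 0}

/-- The code `C^σ = {(c_{σ(1)},…,c_{σ(n)}) : c ∈ C}`. -/
def permCode {n : ℕ} (σ : Equiv.Perm (Fin n)) (C : Set (Fin n → ZMod 2)) :
    Set (Fin n → ZMod 2) :=
  (fun c => c ∘ σ) '' C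

/-- Automorphism group (as a set of permutations) of a code: `Aut(C) = {σ : C^σ = C}`. -/
def autCode {n : ℕ} (C : Set (Fin n → ZMod 2)) : Set (Equiv.Perm (Fin n)) :=
  {σ | permCode σ C = C}

/-- The orbit `GT = {T^σ : σ ∈ G}` of a finset `T` under a set `G` of permutations. -/
def orbitT {n : ℕ} (G : Set (Equiv.Perm (Fin n))) (T : Finset (Fin n)) :
    Set (Finset (Fin n)) :=
  {S | ∃ σ ∈ G, T.image σ = S}

/-- The differentiation `γ`: for `y` of cardinality `k - 1`,
`(γ f)(y) = ∑_{z ⊇ y, |z| = |y| + 1} f(z)`. -/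
def gammaD {n : ℕ} (f : Finset (Fin n) → ℝ) (y : Finset (Fin n)) : ℝ :=
  ∑ i ∈ yᶜ, f (insert i y)

/-- `f ∈ Harm_k`: a degree-`k` harmonic function, i.e. an element of `ℝX_k`
(a real-valued function supported on the `k`-element subsets) killed by `γ`. -/
def IsHarm {n : ℕ} (k : ℕ) (f : Finset (Fin n) → ℝ) : Prop :=
  (∀ s : Finset (Fin n), s.card ≠ k → f s = 0) ∧ ∀ y : Finset (Fin n), gammaD f y = 0

/-- `f̃(u) = ∑_{z ⊆ u} f(z)`. -/
def ftilde {n : ℕ} (f : Finset (Fin n) → ℝ) (u : Finset (Fin n)) : ℝ :=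
  ∑ z ∈ u.powerset, f z

/-- Harmonic weight enumerator `w_{C,f} = ∑_{c ∈ C} f̃(supp c) x^{n - wt c} y^{wt c}`,
in the variables `x = X 0`, `y = X 1`. -/
noncomputable def hwe {n : ℕ} (C : Set (Fin n → ZMod 2)) (f : Finset (Fin n) → ℝ) :
    MvPolynomial (Fin 2) ℝ :=
  ∑ c ∈ C.toFinite.toFinset,
    MvPolynomial.C (ftilde f (suppF c)) *
      MvPolynomial.X 0 ^ (n - wt c) * MvPolynomial.X 1 ^ (wt c)

open Finset

lemma harm_sum_eq_zero {n t : ℕ} (ht : 0 < t) (f : Finset (Fin n) → ℝ) (hf : IsHarm t f) :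
    ∑ s ∈ univ.filter (fun s : Finset (Fin n) => s.card = t), f s = 0 := by
  classical
  have h0 : ∑ y ∈ univ.filter (fun y : Finset (Fin n) => y.card = t - 1), gammaD f y = 0 := by
    simp [hf.2]
  have key : ∑ y ∈ univ.filter (fun y : Finset (Fin n) => y.card = t - 1), gammaD f y
      = ∑ s ∈ univ.filter (fun s : Finset (Fin n) => s.card = t), (t : ℝ) * f s := by
    unfold gammaD
    rw [Finset.sum_sigma']
    have h2 : ∀ s ∈ univ.filter (fun s : Finset (Fin n) => s.card = t),
        (t : ℝ) * f s = ∑ _i ∈ s, f s := by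
      intro s hs
      simp only [mem_filter] at hs
      rw [Finset.sum_const, hs.2, nsmul_eq_mul]
    rw [Finset.sum_congr rfl h2, Finset.sum_sigma']
    refine Finset.sum_nbij' (fun p => ⟨insert p.2 p.1, p.2⟩) (fun q => ⟨q.1.erase q.2, q.2⟩)
      ?_ ?_ ?_ ?_ ?_
    · rintro ⟨y, i⟩ hp
      simp only [mem_sigma, mem_filter, mem_univ, true_and, mem_compl] at hp ⊢
      obtain ⟨hy, hi⟩ := hp
      refine ⟨?_, mem_insert_self _ _⟩
      rw [card_insert_of_notMem hi, hy]
      omega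
    · rintro ⟨s, i⟩ hq
      simp only [mem_sigma, mem_filter, mem_univ, true_and, mem_compl] at hq ⊢
      obtain ⟨hs, hi⟩ := hq
      refine ⟨?_, notMem_erase _ _⟩
      rw [card_erase_of_mem hi, hs]
    · rintro ⟨y, i⟩ hp
      simp only [mem_sigma, mem_filter, mem_univ, true_and, mem_compl] at hp
      simp [erase_insert hp.2]
    · rintro ⟨s, i⟩ hq
      simp only [mem_sigma, mem_filter, mem_univ, true_and, mem_compl] at hq
      simp [insert_erase hq.2]
    · rintro ⟨y, i⟩ hp
      rfl
  rw [key, ← Finset.mul_sum] at h0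
  have : (t : ℝ) ≠ 0 := Nat.cast_ne_zero.mpr ht.ne'
  exact (mul_eq_zero.mp h0).resolve_left this

/-- For an isodual binary linear code `C` with `C^⊥ = C^σ`, if `Aut(C)` has
exactly two orbits `GT₁ ⊔ GT₂` on `t`-element subsets and `(GT₁)^σ = GT₂`, then for every
degree-`t` harmonic function `f` invariant under `Aut(C)` we have `w_{C,f} + w_{C^⊥,f} = 0`. -/
theorem hwe_sum_zero {n t : ℕ} (C : Submodule (ZMod 2) (Fin n → ZMod 2))
    (σ : Equiv.Perm (Fin n)) (hσ : dualCode ↑C = permCode σ ↑C)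
    (T₁ T₂ : Finset (Fin n)) (hT₁ : T₁.card = t) (hT₂ : T₂.card = t)
    (hcover : ∀ T : Finset (Fin n), T.card = t →
      T ∈ orbitT (autCode ↑C) T₁ ∨ T ∈ orbitT (autCode ↑C) T₂)
    (hdisj : Disjoint (orbitT (autCode ↑C) T₁) (orbitT (autCode ↑C) T₂))
    (horb : (fun S : Finset (Fin n) => S.image σ) '' orbitT (autCode ↑C) T₁
      = orbitT (autCode ↑C) T₂) :
    ∀ f : Finset (Fin n) → ℝ, IsHarm t f →
      (∀ τ ∈ autCode (↑C : Set (Fin n → ZMod 2)), ∀ s : Finset (Fin n), f (s.image τ) = f s) →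
      hwe ↑C f + hwe (dualCode ↑C) f = 0 := by
  classical
  intro f hf hinv
  set G := autCode (↑C : Set (Fin n → ZMod 2)) with hG
  have h1G : (1 : Equiv.Perm (Fin n)) ∈ G := by
    simp only [hG, autCode, Set.mem_setOf_eq, permCode]
    simp
  -- t is positive
  rcases Nat.eq_zero_or_pos t with ht0 | ht
  · exfalso
    subst ht0
    rw [Finset.card_eq_zero] at hT₁ hT₂
    subst hT₁; subst hT₂
    have h1 : (∅ : Finset (Fin n)) ∈ orbitT G ∅ := ⟨1, h1G, by simp⟩
    exact (Set.disjoint_left.mp hdisj h1) h1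
  -- card of orbit elements
  have horbcard : ∀ (T : Finset (Fin n)), ∀ s ∈ orbitT G T, s.card = T.card := by
    rintro T s ⟨τ, _, rfl⟩
    exact Finset.card_image_of_injective _ τ.injective
  -- f constant on orbits
  have hconst : ∀ (T : Finset (Fin n)), ∀ s ∈ orbitT G T, f s = f T := by
    rintro T s ⟨τ, hτ, rfl⟩
    exact hinv τ hτ T
  -- finset versions of orbits
  set O₁ : Finset (Finset (Fin n)) := univ.filter (· ∈ orbitT G T₁) with hO₁
  set O₂ : Finset (Finset (Fin n)) := univ.filter (· ∈ orbitT G T₂) with hO₂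
  have hmO₁ : ∀ s, s ∈ O₁ ↔ s ∈ orbitT G T₁ := by intro s; simp [hO₁]
  have hmO₂ : ∀ s, s ∈ O₂ ↔ s ∈ orbitT G T₂ := by intro s; simp [hO₂]
  have hBsplit : univ.filter (fun s : Finset (Fin n) => s.card = t) = O₁ ∪ O₂ := by
    ext s
    simp only [mem_filter, mem_univ, true_and, mem_union, hmO₁, hmO₂]
    constructor
    · exact fun h => hcover s h
    · rintro (h | h)
      · rw [horbcard T₁ s h, hT₁]
      · rw [horbcard T₂ s h, hT₂]
  have hdisjF : Disjoint O₁ O₂ := by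
    rw [Finset.disjoint_left]
    intro s h1 h2
    exact Set.disjoint_left.mp hdisj ((hmO₁ s).1 h1) ((hmO₂ s).1 h2)
  -- equal orbit sizes
  have hOimg : O₁.image (fun S => S.image σ) = O₂ := by
    ext S
    rw [Finset.mem_image, hmO₂, ← horb]
    constructor
    · rintro ⟨u, hu, rfl⟩
      exact ⟨u, (hmO₁ u).1 hu, rfl⟩
    · rintro ⟨u, hu, rfl⟩
      exact ⟨u, (hmO₁ u).2 hu, rfl⟩
  have hcardeq : O₁.card = O₂.card := by
    rw [← hOimg, Finset.card_image_of_injective _ (Finset.image_injective σ.injective)]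
  -- sum of f over t-sets splits
  have hsum0 := harm_sum_eq_zero ht f hf
  rw [hBsplit, Finset.sum_union hdisjF] at hsum0
  have hs1 : ∑ s ∈ O₁, f s = O₁.card * f T₁ := by
    rw [Finset.sum_congr rfl (fun s hs => hconst T₁ s ((hmO₁ s).1 hs)), Finset.sum_const,
      nsmul_eq_mul]
  have hs2 : ∑ s ∈ O₂, f s = O₂.card * f T₂ := by
    rw [Finset.sum_congr rfl (fun s hs => hconst T₂ s ((hmO₂ s).1 hs)), Finset.sum_const,
      nsmul_eq_mul]
  have hT₁mem : T₁ ∈ O₁ := (hmO₁ T₁).2 ⟨1, h1G, by simp⟩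
  have hO₁pos : (0 : ℝ) < O₁.card := by
    exact_mod_cast Finset.card_pos.mpr ⟨T₁, hT₁mem⟩
  have hab : f T₂ = - f T₁ := by
    rw [hs1, hs2, ← hcardeq] at hsum0
    have : (O₁.card : ℝ) * (f T₁ + f T₂) = 0 := by ring_nf; ring_nf at hsum0; linarith
    have := (mul_eq_zero.mp this).resolve_left hO₁pos.ne'
    linarith
  -- main sign flip
  have hkey : ∀ s : Finset (Fin n), f (s.image σ) = - f s := by
    intro s
    by_cases hc : s.card = t
    · rcases hcover s hc with h | h
      · have himg : s.image σ ∈ orbitT G T₂ := by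
          rw [← horb]; exact ⟨s, h, rfl⟩
        rw [hconst T₂ _ himg, hconst T₁ s h, hab]
      · have hc' : (s.image σ).card = t := by
          rw [Finset.card_image_of_injective _ σ.injective, hc]
        have himg : s.image σ ∈ orbitT G T₁ := by
          rcases hcover _ hc' with h' | h'
          · exact h'
          · exfalso
            rw [← horb] at h'
            obtain ⟨u, hu, hue⟩ := h'
            have : u = s := Finset.image_injective σ.injective hue
            subst this
            exact Set.disjoint_left.mp hdisj hu h
        rw [hconst T₁ _ himg, hconst T₂ s h, hab]
        ring
    · rw [hf.1 s hc, hf.1 _ (by rwa [Finset.card_image_of_injective _ σ.injective]), neg_zero]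
  -- sign flip for ftilde under σ.symm
  have hft : ∀ u : Finset (Fin n), ftilde f (u.image σ.symm) = - ftilde f u := by
    intro u
    unfold ftilde
    rw [← Finset.sum_neg_distrib]
    refine Finset.sum_nbij' (fun w => w.image σ) (fun z => z.image σ.symm) ?_ ?_ ?_ ?_ ?_
    · intro w hw
      rw [Finset.mem_powerset] at hw ⊢
      have := Finset.image_subset_image (f := (σ : Fin n → Fin n)) hw
      rwa [Finset.image_image, show (σ : Fin n → Fin n) ∘ σ.symm = id from funext fun i => σ.apply_symm_apply i, Finset.image_id] at this
    · intro z hz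
      rw [Finset.mem_powerset] at hz ⊢
      exact Finset.image_subset_image hz
    · intro w hw
      simp [Finset.image_image]
    · intro z hz
      simp [Finset.image_image]
    · intro w hw
      rw [hkey w, neg_neg]
  -- support under composition
  have hsupp : ∀ d : Fin n → ZMod 2, suppF (d ∘ σ) = (suppF d).image σ.symm := by
    intro d
    ext i
    simp only [suppF, mem_filter, mem_univ, true_and, Finset.mem_image, Function.comp_apply]
    constructor
    · intro h
      exact ⟨σ i, h, σ.symm_apply_apply i⟩
    · rintro ⟨j, hj, rfl⟩
      rwa [σ.apply_symm_apply]
  have hwt : ∀ d : Fin n → ZMod 2, wt (d ∘ σ) = wt d := by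
    intro d
    show (suppF (d ∘ σ)).card = (suppF d).card
    rw [hsupp d]
    exact Finset.card_image_of_injective _ σ.symm.injective
  -- rewrite dual as permuted code
  rw [hσ]
  unfold hwe
  have hPC : (permCode σ (↑C : Set (Fin n → ZMod 2))).toFinite.toFinset
      = (↑C : Set (Fin n → ZMod 2)).toFinite.toFinset.image (fun c => c ∘ σ) := by
    ext c
    simp only [Set.Finite.mem_toFinset, permCode, Set.mem_image, Finset.mem_image]
  have hcompinj : ∀ a ∈ (↑C : Set (Fin n → ZMod 2)).toFinite.toFinset,
      ∀ b ∈ (↑C : Set (Fin n → ZMod 2)).toFinite.toFinset,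
      (fun c : Fin n → ZMod 2 => c ∘ σ) a = (fun c => c ∘ σ) b → a = b := by
    intro a _ b _ h
    funext i
    have := congrFun h (σ.symm i)
    simpa [σ.apply_symm_apply] using this
  rw [hPC, Finset.sum_image hcompinj, ← Finset.sum_add_distrib]
  apply Finset.sum_eq_zero
  intro d hd
  rw [hwt d, hsupp d, hft, map_neg]
  ring
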